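/- Let α = (α_0, ..., α_ℓ) be a filter of order p ≥ 2 and let H ∈ (0,1). Then the series ∑_{k=1}^{∞} k (∑_{q,r=0}^{ℓ} α_q α_r |k+q-r|^{2H})^2 converges. -/

import Mathlib

open Finset

/-- First-order MVT bound for rpow with exponent `s ≤ 1`. -/
lemma rpow_mvt_bound {s : ℝ} (hs : s ≤ 1) {t u : ℝ} (ht : 0 < t) (hu : 0 ≤ u) :
    |(t + u) ^ s - t ^ s| ≤ |s| * t ^ (s - 1) * u := by
  have key := norm_image_sub_le_of_norm_deriv_le_segment'
    (f := fun x : ℝ => x ^ s) (f' := fun x : ℝ => s * x ^ (s - 1))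
    (a := t) (b := t + u) (C := |s| * t ^ (s - 1))
    (fun x hx => (Real.hasDerivAt_rpow_const
      (Or.inl (ne_of_gt (lt_of_lt_of_le ht hx.1)))).hasDerivWithinAt)
    (fun x hx => by
      have hx0 : 0 < x := lt_of_lt_of_le ht hx.1
      have h1 : x ^ (s - 1) ≤ t ^ (s - 1) :=
        Real.rpow_le_rpow_of_nonpos ht hx.1 (by linarith)
      have h2 : (0:ℝ) ≤ x ^ (s - 1) := Real.rpow_nonneg hx0.le _
      rw [Real.norm_eq_abs, abs_mul, abs_of_nonneg h2]
      exact mul_le_mul_of_nonneg_left h1 (abs_nonneg s))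
    (t + u) (Set.right_mem_Icc.2 (by linarith))
  simpa [Real.norm_eq_abs] using key

/-- Second-order Taylor bound for rpow with exponent `s ≤ 2`. -/
lemma rpow_taylor_bound {s : ℝ} (hs : s ≤ 2) {t u : ℝ} (ht : 0 < t) (hu : 0 ≤ u) :
    |(t + u) ^ s - t ^ s - s * t ^ (s - 1) * u| ≤ |s| * |s - 1| * t ^ (s - 2) * (u * u) := by
  set φ : ℝ → ℝ := fun v => (t + v) ^ s - s * t ^ (s - 1) * v with hφ
  have hderiv : ∀ v ∈ Set.Icc (0:ℝ) u,
      HasDerivWithinAt φ (s * (t + v) ^ (s - 1) - s * t ^ (s - 1)) (Set.Icc 0 u) v := by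
    intro v hv
    have htv : (0:ℝ) < t + v := by linarith [hv.1]
    have h1 : HasDerivAt (fun v : ℝ => (t + v) ^ s) (s * (t + v) ^ (s - 1)) v := by
      have := (Real.hasDerivAt_rpow_const (x := t + v) (p := s)
        (Or.inl (ne_of_gt htv))).comp v ((hasDerivAt_id v).const_add t)
      rw [mul_one] at this; exact this
    have h2 : HasDerivAt (fun y : ℝ => s * t ^ (s - 1) * y) (s * t ^ (s - 1)) v := by
      simpa using HasDerivAt.const_mul (s * t ^ (s - 1)) (hasDerivAt_id v)
    exact (h1.sub h2).hasDerivWithinAt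
  have hbound : ∀ v ∈ Set.Ico (0:ℝ) u,
      ‖s * (t + v) ^ (s - 1) - s * t ^ (s - 1)‖ ≤ |s| * (|s - 1| * t ^ (s - 2) * u) := by
    intro v hv
    have h1 : |(t + v) ^ (s - 1) - t ^ (s - 1)| ≤ |s - 1| * t ^ (s - 1 - 1) * v :=
      rpow_mvt_bound (by linarith) ht hv.1
    have e : s - 1 - 1 = s - 2 := by ring
    rw [e] at h1
    have h3 : (0:ℝ) ≤ |s - 1| * t ^ (s - 2) := by positivity
    have h2 : |s - 1| * t ^ (s - 2) * v ≤ |s - 1| * t ^ (s - 2) * u :=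
      mul_le_mul_of_nonneg_left hv.2.le h3
    rw [Real.norm_eq_abs, ← mul_sub, abs_mul]
    exact mul_le_mul_of_nonneg_left (h1.trans h2) (abs_nonneg s)
  have key := norm_image_sub_le_of_norm_deriv_le_segment' hderiv hbound u
    (Set.right_mem_Icc.2 hu)
  have heq : φ u - φ 0 = (t + u) ^ s - t ^ s - s * t ^ (s - 1) * u := by
    simp only [hφ]
    ring_nf
  rw [Real.norm_eq_abs, heq] at key
  calc |(t + u) ^ s - t ^ s - s * t ^ (s - 1) * u|
      ≤ |s| * (|s - 1| * t ^ (s - 2) * u) * (u - 0) := key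
    _ = |s| * |s - 1| * t ^ (s - 2) * (u * u) := by ring

/-- Moment cancellation: if the first two moments of `α` vanish, then
`∑ α_q (t+q)^s` is `O(t^(s-2))`. -/
lemma filter_sum_rpow_bound (ℓ : ℕ) (α : ℕ → ℝ) {s : ℝ} (hs : s ≤ 2)
    (h0 : ∑ q ∈ Finset.range (ℓ + 1), α q = 0)
    (h1 : ∑ q ∈ Finset.range (ℓ + 1), α q * (q : ℝ) = 0)
    {t : ℝ} (ht : 1 ≤ t) :
    |∑ q ∈ Finset.range (ℓ + 1), α q * (t + q) ^ s| ≤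
      (|s| * |s - 1| * (ℓ : ℝ) ^ 2 * ∑ q ∈ Finset.range (ℓ + 1), |α q|) * t ^ (s - 2) := by
  have ht0 : (0:ℝ) < t := lt_of_lt_of_le zero_lt_one ht
  have key : ∑ q ∈ Finset.range (ℓ + 1), α q * (t + q) ^ s
      = ∑ q ∈ Finset.range (ℓ + 1), α q * ((t + q) ^ s - t ^ s - s * t ^ (s - 1) * q) := by
    simp only [mul_sub, Finset.sum_sub_distrib]
    have e2 : ∑ q ∈ Finset.range (ℓ + 1), α q * t ^ s = 0 := by
      rw [← Finset.sum_mul, h0, zero_mul]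
    have e3 : ∑ q ∈ Finset.range (ℓ + 1), α q * (s * t ^ (s - 1) * q) = 0 := by
      have : ∀ q ∈ Finset.range (ℓ + 1),
          α q * (s * t ^ (s - 1) * q) = s * t ^ (s - 1) * (α q * q) := by
        intro q _; ring
      rw [Finset.sum_congr rfl this, ← Finset.mul_sum, h1, mul_zero]
    rw [e2, e3]
    ring
  rw [key]
  calc |∑ q ∈ Finset.range (ℓ + 1), α q * ((t + q) ^ s - t ^ s - s * t ^ (s - 1) * q)|
      ≤ ∑ q ∈ Finset.range (ℓ + 1), |α q * ((t + q) ^ s - t ^ s - s * t ^ (s - 1) * q)| :=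
        Finset.abs_sum_le_sum_abs _ _
    _ ≤ ∑ q ∈ Finset.range (ℓ + 1), |α q| * (|s| * |s - 1| * (ℓ : ℝ) ^ 2 * t ^ (s - 2)) := by
        apply Finset.sum_le_sum
        intro q hq
        rw [abs_mul]
        apply mul_le_mul_of_nonneg_left _ (abs_nonneg _)
        have hq' : (q : ℝ) ≤ (ℓ : ℝ) := by
          exact_mod_cast Nat.lt_succ_iff.mp (Finset.mem_range.mp hq)
        have hq0 : (0:ℝ) ≤ (q : ℝ) := Nat.cast_nonneg q
        have hb := rpow_taylor_bound hs ht0 hq0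
        refine hb.trans ?_
        have h4 : (q : ℝ) * q ≤ (ℓ : ℝ) ^ 2 := by nlinarith
        have h5 : (0:ℝ) ≤ |s| * |s - 1| * t ^ (s - 2) := by positivity
        calc |s| * |s - 1| * t ^ (s - 2) * ((q:ℝ) * q)
            ≤ |s| * |s - 1| * t ^ (s - 2) * (ℓ : ℝ) ^ 2 :=
              mul_le_mul_of_nonneg_left h4 h5
          _ = |s| * |s - 1| * (ℓ : ℝ) ^ 2 * t ^ (s - 2) := by ring
    _ = (|s| * |s - 1| * (ℓ : ℝ) ^ 2 * ∑ q ∈ Finset.range (ℓ + 1), |α q|) * t ^ (s - 2) := by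
        rw [← Finset.sum_mul]
        ring

/-- For a filter `α` of order `p ≥ 2` and `H ∈ (0,1)`, the series
`∑_{k=1}^∞ k (∑_{q,r} α_q α_r |k+q-r|^{2H})²` converges. -/
theorem filter_series_summable_weighted (ℓ p : ℕ) (hp : 2 ≤ p) (α : ℕ → ℝ)
    (hzero : ∀ r < p, ∑ q ∈ Finset.range (ℓ + 1), α q * (q : ℝ) ^ r = 0)
    (hne : ∑ q ∈ Finset.range (ℓ + 1), α q * (q : ℝ) ^ p ≠ 0)
    (H : ℝ) (hH : H ∈ Set.Ioo (0 : ℝ) 1) :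
    Summable (fun k : ℕ =>
      ((k : ℝ) + 1) *
      (∑ q ∈ Finset.range (ℓ + 1), ∑ r ∈ Finset.range (ℓ + 1),
        α q * α r * |((k : ℝ) + 1) + (q : ℝ) - (r : ℝ)| ^ (2 * H)) ^ 2) := by
  obtain ⟨hH0, hH1⟩ := hH
  have h0 : ∑ q ∈ Finset.range (ℓ + 1), α q = 0 := by
    have := hzero 0 (by omega); simpa using this
  have h1 : ∑ q ∈ Finset.range (ℓ + 1), α q * (q : ℝ) = 0 := by
    have := hzero 1 (by omega); simpa using this
  set A : ℝ := ∑ q ∈ Finset.range (ℓ + 1), |α q| with hA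
  have hA0 : 0 ≤ A := Finset.sum_nonneg fun q _ => abs_nonneg _
  set F : ℝ → ℝ := fun t => ∑ q ∈ Finset.range (ℓ + 1), α q * (t + q) ^ (2 * H) with hF
  set G : ℝ → ℝ := fun t => ∑ q ∈ Finset.range (ℓ + 1), α q * (t + q) ^ (2 * H - 1) with hG
  set c2 : ℝ := |2 * H - 1| * |2 * H - 1 - 1| * (ℓ : ℝ) ^ 2 * A with hc2
  have hc20 : 0 ≤ c2 := by positivity
  have hGb : ∀ t : ℝ, 1 ≤ t → |G t| ≤ c2 * t ^ (2 * H - 1 - 2) := fun t ht =>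
    filter_sum_rpow_bound ℓ α (by linarith) h0 h1 ht
  -- derivative of F
  have hFderiv : ∀ x : ℝ, 0 < x → HasDerivAt F (2 * H * G x) x := by
    intro x hx
    have hterm : ∀ q ∈ Finset.range (ℓ + 1),
        HasDerivAt (fun t : ℝ => α q * (t + q) ^ (2 * H))
          (α q * (2 * H * (x + q) ^ (2 * H - 1))) x := by
      intro q _
      have hxq : x + (q : ℝ) ≠ 0 := by
        have : (0:ℝ) ≤ (q : ℝ) := Nat.cast_nonneg q
        positivity
      have hd := (Real.hasDerivAt_rpow_const (x := x + q) (p := 2 * H) (Or.inl hxq)).comp x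
        ((hasDerivAt_id x).add_const (q : ℝ))
      simpa using (hd.const_mul (α q))
    have hsum := HasDerivAt.fun_sum hterm
    have : 2 * H * G x = ∑ q ∈ Finset.range (ℓ + 1), α q * (2 * H * (x + q) ^ (2 * H - 1)) := by
      rw [hG, Finset.mul_sum]
      exact Finset.sum_congr rfl fun q _ => by ring
    rw [this]
    exact hsum
  -- main pointwise bound
  set D : ℝ := A * (2 * ℓ) * (2 * H * c2) * (2 : ℝ) ^ (3 - 2 * H) with hD
  have hD0 : 0 ≤ D := by positivity
  have hSb : ∀ k : ℕ, 2 * ℓ ≤ k →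
      |∑ q ∈ Finset.range (ℓ + 1), ∑ r ∈ Finset.range (ℓ + 1),
        α q * α r * |((k : ℝ) + 1) + (q : ℝ) - (r : ℝ)| ^ (2 * H)|
      ≤ D * ((k : ℝ) + 1) ^ (2 * H - 3) := by
    intro k hk
    have hk1 : (2 * (ℓ:ℝ)) ≤ (k:ℝ) := by exact_mod_cast hk
    have hl0 : (0:ℝ) ≤ (ℓ:ℝ) := Nat.cast_nonneg ℓ
    set a : ℝ := (k : ℝ) + 1 - ℓ with ha
    have ha1 : 1 ≤ a := by rw [ha]; linarith
    have hab : a ≤ (k : ℝ) + 1 := by rw [ha]; linarith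
    set Ck : ℝ := 2 * H * c2 * a ^ (2 * H - 3) with hCk
    have ha0 : (0:ℝ) < a := by linarith
    have hCk0 : 0 ≤ Ck := by
      have := Real.rpow_nonneg ha0.le (2 * H - 3)
      rw [hCk]; positivity
    have hmvt := norm_image_sub_le_of_norm_deriv_le_segment'
      (f := F) (f' := fun x => 2 * H * G x) (a := a) (b := (k : ℝ) + 1) (C := Ck)
      (fun x hx => (hFderiv x (by linarith [hx.1])).hasDerivWithinAt)
      (fun x hx => by
        have hx1 : 1 ≤ x := le_trans ha1 hx.1
        have hGx := hGb x hx1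
        have e : 2 * H - 1 - 2 = 2 * H - 3 := by ring
        rw [e] at hGx
        have hxa : x ^ (2 * H - 3) ≤ a ^ (2 * H - 3) :=
          Real.rpow_le_rpow_of_nonpos ha0 hx.1 (by linarith)
        rw [Real.norm_eq_abs, abs_mul, abs_of_pos (by linarith : (0:ℝ) < 2 * H)]
        rw [hCk]
        calc 2 * H * |G x| ≤ 2 * H * (c2 * x ^ (2 * H - 3)) :=
              mul_le_mul_of_nonneg_left hGx (by linarith)
          _ ≤ 2 * H * (c2 * a ^ (2 * H - 3)) :=
              mul_le_mul_of_nonneg_left (mul_le_mul_of_nonneg_left hxa hc20) (by linarith)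
          _ = 2 * H * c2 * a ^ (2 * H - 3) := by ring)
    have key : ∀ r ∈ Finset.range (ℓ + 1),
        |F ((k : ℝ) + 1 - r) - F ((k : ℝ) + 1)| ≤ 2 * (Ck * ℓ) := by
      intro r hr
      have hrl : (r : ℝ) ≤ (ℓ : ℝ) := by
        exact_mod_cast Nat.lt_succ_iff.mp (Finset.mem_range.mp hr)
      have hr0 : (0:ℝ) ≤ (r : ℝ) := Nat.cast_nonneg r
      have hx : (k : ℝ) + 1 - r ∈ Set.Icc a ((k : ℝ) + 1) :=
        ⟨by rw [ha]; linarith, by linarith⟩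
      have hm1 := hmvt ((k : ℝ) + 1 - r) hx
      have hm2 := hmvt ((k : ℝ) + 1) (Set.right_mem_Icc.2 hab)
      rw [Real.norm_eq_abs] at hm1 hm2
      have ht : |F ((k : ℝ) + 1 - r) - F ((k : ℝ) + 1)|
          ≤ |F ((k : ℝ) + 1 - r) - F a| + |F ((k : ℝ) + 1) - F a| := by
        have := abs_sub_le (F ((k : ℝ) + 1 - r)) (F a) (F ((k : ℝ) + 1))
        rw [abs_sub_comm (F a) (F ((k : ℝ) + 1))] at this
        exact this
      have hb1 : Ck * ((k : ℝ) + 1 - r - a) ≤ Ck * ℓ := by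
        apply mul_le_mul_of_nonneg_left _ hCk0
        rw [ha]; linarith
      have hb2 : Ck * ((k : ℝ) + 1 - a) ≤ Ck * ℓ := by
        apply mul_le_mul_of_nonneg_left _ hCk0
        rw [ha]; linarith
      linarith
    have hre : ∑ q ∈ Finset.range (ℓ + 1), ∑ r ∈ Finset.range (ℓ + 1),
          α q * α r * |((k : ℝ) + 1) + (q : ℝ) - (r : ℝ)| ^ (2 * H)
        = ∑ r ∈ Finset.range (ℓ + 1), α r * (F ((k : ℝ) + 1 - r) - F ((k : ℝ) + 1)) := by
      rw [Finset.sum_comm]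
      have step : ∀ r ∈ Finset.range (ℓ + 1),
          ∑ q ∈ Finset.range (ℓ + 1),
            α q * α r * |((k : ℝ) + 1) + (q : ℝ) - (r : ℝ)| ^ (2 * H)
          = α r * F ((k : ℝ) + 1 - r) := by
        intro r hr
        have hrl : (r : ℝ) ≤ (ℓ : ℝ) := by
          exact_mod_cast Nat.lt_succ_iff.mp (Finset.mem_range.mp hr)
        rw [hF, Finset.mul_sum]
        apply Finset.sum_congr rfl
        intro q hq
        have hq0 : (0:ℝ) ≤ (q : ℝ) := Nat.cast_nonneg q
        have pos : (0:ℝ) < ((k : ℝ) + 1) + (q : ℝ) - (r : ℝ) := by linarith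
        rw [abs_of_pos pos]
        have e : ((k : ℝ) + 1 - r) + (q : ℝ) = ((k : ℝ) + 1) + (q : ℝ) - (r : ℝ) := by ring
        rw [e]
        ring
      rw [Finset.sum_congr rfl step]
      have expand : ∑ r ∈ Finset.range (ℓ + 1),
            α r * (F ((k : ℝ) + 1 - r) - F ((k : ℝ) + 1))
          = ∑ r ∈ Finset.range (ℓ + 1), α r * F ((k : ℝ) + 1 - r)
            - (∑ r ∈ Finset.range (ℓ + 1), α r) * F ((k : ℝ) + 1) := by
        rw [Finset.sum_mul]
        rw [← Finset.sum_sub_distrib]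
        exact Finset.sum_congr rfl fun r _ => by ring
      rw [expand, h0, zero_mul, sub_zero]
    rw [hre]
    have habs : |∑ r ∈ Finset.range (ℓ + 1), α r * (F ((k : ℝ) + 1 - r) - F ((k : ℝ) + 1))|
        ≤ A * (2 * (Ck * ℓ)) := by
      calc |∑ r ∈ Finset.range (ℓ + 1), α r * (F ((k : ℝ) + 1 - r) - F ((k : ℝ) + 1))|
          ≤ ∑ r ∈ Finset.range (ℓ + 1), |α r * (F ((k : ℝ) + 1 - r) - F ((k : ℝ) + 1))| :=
            Finset.abs_sum_le_sum_abs _ _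
        _ ≤ ∑ r ∈ Finset.range (ℓ + 1), |α r| * (2 * (Ck * ℓ)) := by
            apply Finset.sum_le_sum
            intro r hr
            rw [abs_mul]
            exact mul_le_mul_of_nonneg_left (key r hr) (abs_nonneg _)
        _ = A * (2 * (Ck * ℓ)) := by rw [← Finset.sum_mul]
    refine habs.trans ?_
    -- compare a^(2H-3) with (k+1)^(2H-3)
    have hhalf : ((k : ℝ) + 1) / 2 ≤ a := by rw [ha]; linarith
    have hpos : (0:ℝ) < ((k : ℝ) + 1) / 2 := by positivity
    have h5 : a ^ (2 * H - 3) ≤ (((k : ℝ) + 1) / 2) ^ (2 * H - 3) :=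
      Real.rpow_le_rpow_of_nonpos hpos hhalf (by linarith)
    have h6 : (((k : ℝ) + 1) / 2) ^ (2 * H - 3)
        = (2 : ℝ) ^ (3 - 2 * H) * ((k : ℝ) + 1) ^ (2 * H - 3) := by
      rw [Real.div_rpow (by positivity) (by norm_num : (0:ℝ) ≤ 2)]
      rw [div_eq_mul_inv, ← Real.rpow_neg (by norm_num : (0:ℝ) ≤ 2)]
      rw [show -(2 * H - 3) = 3 - 2 * H by ring]
      ring
    have hCkb : Ck ≤ 2 * H * c2 * ((2 : ℝ) ^ (3 - 2 * H) * ((k : ℝ) + 1) ^ (2 * H - 3)) := by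
      rw [hCk, ← h6]
      exact mul_le_mul_of_nonneg_left h5 (by positivity)
    calc A * (2 * (Ck * ℓ))
        ≤ A * (2 * ((2 * H * c2 * ((2 : ℝ) ^ (3 - 2 * H) * ((k : ℝ) + 1) ^ (2 * H - 3))) * ℓ)) := by
          apply mul_le_mul_of_nonneg_left _ hA0
          apply mul_le_mul_of_nonneg_left _ (by norm_num : (0:ℝ) ≤ 2)
          exact mul_le_mul_of_nonneg_right hCkb hl0
      _ = D * ((k : ℝ) + 1) ^ (2 * H - 3) := by rw [hD]; ring

  -- summability
  have hsum0 : Summable (fun n : ℕ => (n : ℝ) ^ (4 * H - 5)) :=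
    Real.summable_nat_rpow.mpr (by linarith)
  have hsum : Summable (fun k : ℕ => ((k : ℝ) + 1) ^ (4 * H - 5)) := by
    have h := hsum0.comp_injective (add_left_injective 1)
    refine h.congr fun k => ?_
    show ((↑(k + 1) : ℝ)) ^ (4 * H - 5) = ((k : ℝ) + 1) ^ (4 * H - 5)
    push_cast
    ring_nf
  apply summable_of_isBigO_nat hsum
  rw [Asymptotics.isBigO_iff]
  refine ⟨D ^ 2, ?_⟩
  filter_upwards [Filter.eventually_ge_atTop (2 * ℓ)] with k hk
  have hb := hSb k hk
  have hknn : (0:ℝ) ≤ (k : ℝ) + 1 := by positivity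
  have hkpos : (0:ℝ) < (k : ℝ) + 1 := by positivity
  have hgnn : (0:ℝ) ≤ ((k : ℝ) + 1) ^ (4 * H - 5) := Real.rpow_nonneg hknn _
  have hfnn : (0:ℝ) ≤ ((k : ℝ) + 1) *
      (∑ q ∈ Finset.range (ℓ + 1), ∑ r ∈ Finset.range (ℓ + 1),
        α q * α r * |((k : ℝ) + 1) + (q : ℝ) - (r : ℝ)| ^ (2 * H)) ^ 2 := by positivity
  rw [Real.norm_eq_abs, Real.norm_eq_abs, abs_of_nonneg hgnn, abs_of_nonneg hfnn]
  have h2 : (∑ q ∈ Finset.range (ℓ + 1), ∑ r ∈ Finset.range (ℓ + 1),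
        α q * α r * |((k : ℝ) + 1) + (q : ℝ) - (r : ℝ)| ^ (2 * H)) ^ 2
      ≤ (D * ((k : ℝ) + 1) ^ (2 * H - 3)) ^ 2 := by
    rw [← sq_abs]
    exact pow_le_pow_left₀ (abs_nonneg _) hb 2
  have h3 : ((k : ℝ) + 1) * (D * ((k : ℝ) + 1) ^ (2 * H - 3)) ^ 2
      = D ^ 2 * ((k : ℝ) + 1) ^ (4 * H - 5) := by
    rw [mul_pow, ← Real.rpow_natCast (((k : ℝ) + 1) ^ (2 * H - 3)) 2,
      ← Real.rpow_mul hknn]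
    rw [show (4 * H - 5 : ℝ) = 1 + (2 * H - 3) * (2 : ℕ) by push_cast; ring]
    rw [Real.rpow_add hkpos, Real.rpow_one]
    ring
  calc ((k : ℝ) + 1) *
      (∑ q ∈ Finset.range (ℓ + 1), ∑ r ∈ Finset.range (ℓ + 1),
        α q * α r * |((k : ℝ) + 1) + (q : ℝ) - (r : ℝ)| ^ (2 * H)) ^ 2
      ≤ ((k : ℝ) + 1) * (D * ((k : ℝ) + 1) ^ (2 * H - 3)) ^ 2 :=
        mul_le_mul_of_nonneg_left h2 hknn
    _ = D ^ 2 * ((k : ℝ) + 1) ^ (4 * H - 5) := h3
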